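/- Let A be an anti-commutative CB-algebra over a field F of characteristic different from 2. Then A⁴ = 0; in particular ((x·y)·z)·w = 0 and x·(y·(z·w)) = 0 for all x, y, z, w ∈ A. -/
import Mathlib


/-- The descending series of ideals: `algPow mul k` is `A^{k+1}`, so
`algPow mul 0 = A`, `algPow mul 1 = A² = span {x·y}` and
`algPow mul (k) = A^{k} · A` for `k ≥ 1`. -/
def algPow {F A : Type*} [Field F] [AddCommGroup A] [Module F A]
    (mul : A →ₗ[F] A →ₗ[F] A) : ℕ → Submodule F A
  | 0 => ⊤
  | k + 1 => Submodule.span F {w : A | ∃ u ∈ algPow mul k, ∃ a : A, w = mul u a}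

/-- An anti-commutative CB-algebra over a field of characteristic different
from 2 satisfies `A⁴ = 0`; in particular `((x·y)·z)·w = 0` and
`x·(y·(z·w)) = 0` for all `x, y, z, w`. -/
theorem stmt_9 (F : Type*) [Field F] (h2 : (2 : F) ≠ 0)
    (A : Type*) [AddCommGroup A] [Module F A]
    (mul : A →ₗ[F] A →ₗ[F] A)
    (hac : ∀ x : A, mul x x = 0)
    (hcb : ∀ x y : A, mul x y = 0 → ∀ z : A, mul (mul x z) y = 0) :
    algPow mul 3 = ⊥ ∧
      (∀ x y z w : A, mul (mul (mul x y) z) w = 0) ∧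
      (∀ x y z w : A, mul x (mul y (mul z w)) = 0) := by
  -- anticommutativity
  have hB : ∀ a b : A, mul a b = - mul b a := by
    intro a b
    have h := hac (a + b)
    simp only [map_add, LinearMap.add_apply, hac a, hac b, zero_add, add_zero] at h
    exact eq_neg_of_add_eq_zero_right h
  -- (x z) x = 0
  have h1 : ∀ x z : A, mul (mul x z) x = 0 := fun x z => hcb x x (hac x) z
  -- x (x z) = 0
  have h1' : ∀ x z : A, mul x (mul x z) = 0 := by
    intro x z; rw [hB]; simp [h1]
  -- a (b c) = - b (a c)
  have hL : ∀ a b c : A, mul a (mul b c) = - mul b (mul a c) := by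
    intro a b c
    have h := h1' (a + b) c
    simp only [map_add, LinearMap.add_apply, h1', zero_add, add_zero] at h
    exact eq_neg_of_add_eq_zero_right h
  -- (x t)(x z) = 0
  have h2a : ∀ x t z : A, mul (mul x t) (mul x z) = 0 :=
    fun x t z => hcb x (mul x z) (h1' x z) t
  -- linearization: (x t)(y z) = -(y t)(x z)
  have hA : ∀ x y t z : A, mul (mul x t) (mul y z) = - mul (mul y t) (mul x z) := by
    intro x y t z
    have h := h2a (x + y) t z
    simp only [map_add, LinearMap.add_apply, h2a, zero_add, add_zero] at h
    exact eq_neg_of_add_eq_zero_right h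
  -- swap first pair with sign
  have e12 : ∀ x y z w : A, mul (mul x y) (mul z w) = - mul (mul y x) (mul z w) := by
    intro x y z w; rw [hB x y]; simp
  -- symmetric under swapping 2nd and 4th
  have q24 : ∀ x y z w : A, mul (mul x y) (mul z w) = mul (mul x w) (mul z y) := by
    intro x y z w
    rw [hA x z y w, hB (mul z y) (mul x w), neg_neg]
  -- the 3-cycle with sign
  have s3 : ∀ x y z w : A, mul (mul x y) (mul z w) = - mul (mul y w) (mul z x) := by
    intro x y z w
    rw [e12 x y z w, q24 y x z w]
  -- 4th-power products of the form (xy)(zw) vanish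
  have key : ∀ x y z w : A, mul (mul x y) (mul z w) = 0 := by
    intro x y z w
    have hQQ : mul (mul x y) (mul z w) = - mul (mul x y) (mul z w) := by
      conv_lhs => rw [s3 x y z w, s3 y w z x, s3 w x z y]
      rw [neg_neg]
    have h2Q : (2 : F) • mul (mul x y) (mul z w) = 0 := by
      rw [two_smul]
      nth_rewrite 2 [hQQ]
      simp
    exact (smul_eq_zero.mp h2Q).resolve_left h2
  -- ((x y) z) w = 0
  have hw1 : ∀ x y z w : A, mul (mul (mul x y) z) w = 0 := by
    intro x y z w
    rw [hB (mul (mul x y) z) w, hL w (mul x y) z, key]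
    simp
  -- x (y (z w)) = 0
  have hw2 : ∀ x y z w : A, mul x (mul y (mul z w)) = 0 := by
    intro x y z w
    rw [hB x (mul y (mul z w)), hB y (mul z w)]
    simp [hw1]
  refine ⟨?_, hw1, hw2⟩
  -- A^4 = 0
  have p1 : ∀ v ∈ algPow mul 1, ∀ b a : A, mul (mul v b) a = 0 := by
    intro v hv
    simp only [algPow] at hv
    induction hv using Submodule.span_induction with
    | mem x hx =>
        obtain ⟨u, -, c, rfl⟩ := hx
        intro b a; exact hw1 u c b a
    | zero => intro b a; simp
    | add u v _ _ hu hv =>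
        intro b a
        simp only [map_add, LinearMap.add_apply, hu b a, hv b a, add_zero]
    | smul c u _ hu =>
        intro b a
        simp only [map_smul, LinearMap.smul_apply, hu b a, smul_zero]
  have p2 : ∀ u ∈ algPow mul 2, ∀ a : A, mul u a = 0 := by
    intro u hu
    simp only [algPow] at hu
    induction hu using Submodule.span_induction with
    | mem x hx =>
        obtain ⟨v, hv, b, rfl⟩ := hx
        intro a; exact p1 v hv b a
    | zero => intro a; simp
    | add u v _ _ hu hv =>
        intro a
        simp only [map_add, LinearMap.add_apply, hu a, hv a, add_zero]
    | smul c u _ hu =>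
        intro a
        simp only [map_smul, LinearMap.smul_apply, hu a, smul_zero]
  rw [eq_bot_iff]
  intro x hx
  have hx' : x ∈ Submodule.span F {w : A | ∃ u ∈ algPow mul 2, ∃ a : A, w = mul u a} := hx
  refine Submodule.span_le.mpr ?_ hx'
  rintro w ⟨u, hu, a, rfl⟩
  simpa using p2 u hu a
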